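/- Let p be a prime and n a positive integer. If A is a subset of (ℤ/pℤ)^n containing no p not-all-equal elements (repetition allowed) summing to zero, then |A| ≤ ((2 + 1/(p-1))^((p-1)/p) · (2 - 1/p))^n. -/

import Mathlib

set_option linter.unusedSectionVars false
set_option linter.unusedVariables false
set_option maxHeartbeats 1000000

open Finset

section SupportLemma

variable {F : Type} [Field F] [DecidableEq F] {D : Type} [Fintype D] [DecidableEq D]

/-- A subspace of functions on a finite set contains an element whose support
has size at least the dimension. -/
lemma exists_mem_support_card_ge (W : Submodule F (D → F)) :
    ∃ h ∈ W, Module.finrank F W ≤ (Finset.univ.filter (fun x => h x ≠ 0)).card := by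
  classical
  set good : Finset D → Prop := fun T => ∀ w ∈ W, (∀ x ∈ T, w x = 0) → w = 0 with hgood
  have huniv : good Finset.univ := by
    intro w _ h
    funext x; exact h x (mem_univ x)
  obtain ⟨T, hTmem, hTmin⟩ :=
    Finset.exists_min_image ((Finset.univ.powerset).filter good) Finset.card
      ⟨Finset.univ, Finset.mem_filter.2 ⟨Finset.mem_powerset.2 (Finset.Subset.refl _), huniv⟩⟩
  have hT : good T := (Finset.mem_filter.1 hTmem).2
  set res : W →ₗ[F] (↥T → F) :=
    (LinearMap.funLeft F F (fun x : ↥T => (x : D))).comp W.subtype with hres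
  have hinj : Function.Injective res := by
    rw [← LinearMap.ker_eq_bot]
    ext w
    simp only [LinearMap.mem_ker, Submodule.mem_bot]
    constructor
    · intro hw
      have : (w : D → F) = 0 := hT w w.2 (fun x hx => congrFun hw ⟨x, hx⟩)
      exact Subtype.ext this
    · rintro rfl; simp
  have hle : Module.finrank F W ≤ T.card := by
    simpa [Module.finrank_fintype_fun_eq_card] using
      LinearMap.finrank_le_finrank_of_injective hinj
  have hge : T.card ≤ Module.finrank F W := by
    have hwit : ∀ x ∈ T, ∃ w ∈ W, (∀ y ∈ T.erase x, w y = 0) ∧ w x ≠ 0 := by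
      intro x hx
      have hne : ¬ good (T.erase x) := by
        intro hgd
        have h1 := hTmin (T.erase x)
          (Finset.mem_filter.2 ⟨Finset.mem_powerset.2 (Finset.erase_subset _ _ |>.trans
            (Finset.mem_powerset.1 (Finset.mem_filter.1 hTmem).1)), hgd⟩)
        have h2 := Finset.card_erase_lt_of_mem hx
        omega
      simp only [hgood] at hne
      push_neg at hne
      obtain ⟨w, hwW, hwz, hwne⟩ := hne
      refine ⟨w, hwW, hwz, ?_⟩
      intro hwx
      apply hwne
      apply hT w hwW
      intro y hy
      by_cases hyx : y = x
      · subst hyx; exact hwx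
      · exact hwz y (Finset.mem_erase.2 ⟨hyx, hy⟩)
    choose wit hwitW hwitz hwitx using hwit
    have hli : LinearIndependent F (fun x : ↥T =>
        (⟨wit x x.2, hwitW x x.2⟩ : W)) := by
      rw [Fintype.linearIndependent_iff]
      intro g hg x
      have hval : ∀ z : D, (((∑ y : ↥T, g y • (⟨wit y y.2, hwitW y y.2⟩ : W)) : W) : D → F) z = 0 := by
        rw [hg]; intro z; rfl
      have h2 := hval x
      have h3 : (((∑ y : ↥T, g y • (⟨wit y y.2, hwitW y y.2⟩ : W)) : W) : D → F) (x : D)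
          = ∑ y : ↥T, g y * wit y y.2 (x : D) := by
        rw [Submodule.coe_sum]
        rw [Finset.sum_apply]
        rfl
      have h4 : ∑ y : ↥T, g y * wit y y.2 (x : D) = g x * wit x x.2 (x : D) := by
        rw [Fintype.sum_eq_single x]
        intro y hyx
        have hxmem : (x : D) ∈ T.erase (y : D) :=
          Finset.mem_erase.2 ⟨fun h => hyx (Subtype.ext h).symm, x.2⟩
        rw [hwitz y y.2 (x : D) hxmem, mul_zero]
      have := h3 ▸ h2
      rw [h4] at this
      exact (mul_eq_zero.1 this).resolve_right (hwitx x x.2)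
    have := hli.fintype_card_le_finrank
    simpa using this
  have hsurj : Function.Surjective res := by
    have heq : Module.finrank F W = Module.finrank F (↥T → F) := by
      rw [Module.finrank_fintype_fun_eq_card]
      simp only [Fintype.card_coe]
      omega
    exact (LinearMap.injective_iff_surjective_of_finrank_eq_finrank heq).1 hinj
  obtain ⟨h, hh⟩ := hsurj (fun _ => 1)
  refine ⟨h, h.2, ?_⟩
  calc Module.finrank F W ≤ T.card := hle
    _ ≤ _ := by
        apply Finset.card_le_card
        intro x hx
        simp only [Finset.mem_filter, Finset.mem_univ, true_and]
        have := congrFun hh ⟨x, hx⟩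
        rw [show ((h : W) : D → F) x = (1 : F) from this]
        exact one_ne_zero

end SupportLemma

section SliceRank

variable {F : Type} [Field F] [DecidableEq F] {K : Type} [Fintype K] [DecidableEq K]
variable {σ : Type} [Fintype σ] [DecidableEq σ]

lemma slice_key_base (S : Finset K) (hS : S.card = 2)
    (A : Finset σ) (c : σ → F) (hc : ∀ a ∈ A, c a ≠ 0)
    (ι : Type) [Fintype ι] (iv : ι → K) (f : ι → σ → F) (g : ι → (K → σ) → F)
    (hiv : ∀ t, iv t ∈ S)
    (hg : ∀ t (x y : K → σ), (∀ j ∈ S, j ≠ iv t → x j = y j) → g t x = g t y)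
    (heq : ∀ x : K → σ, (∀ j ∈ S, x j ∈ A) →
      ∑ a ∈ A, c a * ∏ j ∈ S, (if x j = a then (1:F) else 0)
        = ∑ t, f t (x (iv t)) * g t x) :
    A.card ≤ Fintype.card ι := by
  classical
  obtain ⟨j1, j2, hj12, rfl⟩ := Finset.card_eq_two.1 hS
  have hjcases : ∀ j ∈ ({j1, j2} : Finset K), j = j1 ∨ j = j2 := by
    intro j hj; simpa using hj
  set P : σ → σ → (K → σ) := fun a b => fun j => if j = j1 then a else b with hP
  have hPj1 : ∀ a b : σ, P a b j1 = a := fun a b => if_pos rfl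
  have hPj2 : ∀ a b : σ, P a b j2 = b := fun a b => if_neg (Ne.symm hj12)
  set u : ι → ↥A → F := fun t a => if iv t = j1 then f t (a : σ) else g t (fun _ => (a : σ)) with hu
  set v : ι → ↥A → F := fun t b => if iv t = j1 then g t (fun _ => (b : σ)) else f t (b : σ) with hv
  have key : ∀ a b : ↥A, (if (a:σ) = (b:σ) then c a else 0) = ∑ t, u t a * v t b := by
    intro a b
    have hmem : ∀ j ∈ ({j1, j2} : Finset K), P a b j ∈ A := by
      intro j hj
      by_cases h : j = j1 <;> simp [hP, h, a.2, b.2]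
    have h1 := heq (P a b) hmem
    have hL : ∑ a' ∈ A, c a' * ∏ j ∈ ({j1, j2} : Finset K), (if P (a:σ) (b:σ) j = a' then (1:F) else 0)
        = (if (a:σ) = (b:σ) then c a else 0) := by
      rw [Finset.sum_eq_single (b : σ)]
      · rw [Finset.prod_pair hj12, hPj1, hPj2]
        by_cases hab : (a : σ) = (b : σ)
        · rw [if_pos hab, if_pos hab, if_pos rfl]; ring_nf; rw [hab]
        · rw [if_neg hab, if_neg hab, if_pos rfl]; ring
      · intro a' _ ha'
        rw [Finset.prod_pair hj12, hPj1, hPj2, if_neg (Ne.symm ha')]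
        ring
      · intro hb; exact absurd b.2 hb
    rw [← hL, h1]
    apply Finset.sum_congr rfl
    intro t _
    by_cases h : iv t = j1
    · have hx : P (a:σ) (b:σ) (iv t) = (a : σ) := by rw [h, hPj1]
      have hgt : g t (P (a:σ) (b:σ)) = g t (fun _ => (b : σ)) := by
        apply hg
        intro j hj hjne
        rcases hjcases j hj with h' | h'
        · exact absurd (h' ▸ h ▸ rfl : j = iv t) hjne
        · rw [h', hPj2]
      rw [hx, hgt]
      simp only [hu, hv, if_pos h]
    · have hivt : iv t = j2 := by
        rcases hjcases (iv t) (hiv t) with h' | h'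
        · exact absurd h' h
        · exact h'
      have hx : P (a:σ) (b:σ) (iv t) = (b : σ) := by rw [hivt, hPj2]
      have hgt : g t (P (a:σ) (b:σ)) = g t (fun _ => (a : σ)) := by
        apply hg
        intro j hj hjne
        rcases hjcases j hj with h' | h'
        · rw [h', hPj1]
        · exact absurd (h' ▸ hivt ▸ rfl : j = iv t) hjne
      rw [hx, hgt]
      simp only [hu, hv, if_neg h]
      ring
  set V : Submodule F (↥A → F) := Submodule.span F (Set.range v) with hV
  have hmem : ∀ a : ↥A, Pi.single a (c (a : σ)) ∈ V := by
    intro a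
    have hrepr : Pi.single a (c (a : σ)) = ∑ t, u t a • v t := by
      funext b
      rw [Finset.sum_apply]
      simp only [Pi.smul_apply, smul_eq_mul]
      rw [← key a b, Pi.single_apply]
      by_cases hba : b = a
      · subst hba; rw [if_pos rfl, if_pos rfl]
      · rw [if_neg hba, if_neg (fun h => hba (Subtype.ext h).symm)]
    rw [hrepr]
    exact Submodule.sum_mem _ fun t _ =>
      Submodule.smul_mem _ _ (Submodule.subset_span ⟨t, rfl⟩)
  have hli : LinearIndependent F (fun a : ↥A => (⟨Pi.single a (c (a:σ)), hmem a⟩ : V)) := by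
    rw [Fintype.linearIndependent_iff]
    intro gcoef hg0 a
    have hval : (((∑ b : ↥A, gcoef b • (⟨Pi.single b (c (b:σ)), hmem b⟩ : V)) : V) : ↥A → F) a = 0 := by
      rw [hg0]; rfl
    rw [Submodule.coe_sum, Finset.sum_apply] at hval
    have hterm : ∀ b : ↥A,
        ((gcoef b • (⟨Pi.single b (c (b:σ)), hmem b⟩ : V) : V) : ↥A → F) a
          = gcoef b * (Pi.single b (c (b:σ)) : ↥A → F) a := by
      intro b; rfl
    rw [Finset.sum_congr rfl (fun b _ => hterm b)] at hval
    rw [Fintype.sum_eq_single a (fun b hba => by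
      simp [Pi.single_apply, Ne.symm hba])] at hval
    simp only [Pi.single_apply, if_pos rfl] at hval
    exact (mul_eq_zero.1 hval).resolve_right (hc _ a.2)
  have h1 : Fintype.card ↥A ≤ Module.finrank F V := hli.fintype_card_le_finrank
  have h2 : Module.finrank F V ≤ Fintype.card ι := by
    refine (finrank_span_le_card _).trans ?_
    rw [Set.toFinset_range]
    exact (Finset.card_image_le).trans (by simp)
  calc A.card = Fintype.card ↥A := (Fintype.card_coe A).symm
    _ ≤ Module.finrank F V := h1
    _ ≤ Fintype.card ι := h2

lemma slice_key (N : ℕ) : ∀ (S : Finset K), S.card = N + 2 →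
    ∀ (A : Finset σ) (c : σ → F), (∀ a ∈ A, c a ≠ 0) →
    ∀ (ι : Type) [Fintype ι], ∀ (iv : ι → K) (f : ι → σ → F) (g : ι → (K → σ) → F),
    (∀ t, iv t ∈ S) →
    (∀ t (x y : K → σ), (∀ j ∈ S, j ≠ iv t → x j = y j) → g t x = g t y) →
    (∀ x : K → σ, (∀ j ∈ S, x j ∈ A) →
      ∑ a ∈ A, c a * ∏ j ∈ S, (if x j = a then (1:F) else 0)
        = ∑ t, f t (x (iv t)) * g t x) →
    A.card ≤ Fintype.card ι := by
  classical
  induction N with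
  | zero =>
    intro S hS A c hc ι _ iv f g hiv hg heq
    exact slice_key_base S hS A c hc ι iv f g hiv hg heq
  | succ N ih =>
    intro S hS A c hc ι _ iv f g hiv hg heq
    have hSne : S.Nonempty := Finset.card_pos.1 (by omega)
    obtain ⟨k0, hk0⟩ := hSne
    set S' : Finset K := S.erase k0 with hS'
    have hS'card : S'.card = N + 2 := by
      rw [hS', Finset.card_erase_of_mem hk0, hS]
      omega
    have hSins : S = insert k0 S' := (Finset.insert_erase hk0).symm
    have hk0S' : k0 ∉ S' := Finset.notMem_erase _ _
    set φ : {t : ι // iv t = k0} → (↥A → F) →ₗ[F] F := fun t =>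
      { toFun := fun h => ∑ z : ↥A, f (t : ι) (z : σ) * h z
        map_add' := by intro h1 h2; simp [mul_add, Finset.sum_add_distrib]
        map_smul' := by
          intro r h
          simp only [Pi.smul_apply, smul_eq_mul, RingHom.id_apply, Finset.mul_sum]
          exact Finset.sum_congr rfl fun z _ => by ring }
      with hφ
    set Φ : (↥A → F) →ₗ[F] ({t : ι // iv t = k0} → F) := LinearMap.pi φ with hΦ
    have hWrank : A.card ≤ Module.finrank F (LinearMap.ker Φ) + Fintype.card {t : ι // iv t = k0} := by
      have h1 := LinearMap.finrank_range_add_finrank_ker Φ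
      have h2 : Module.finrank F (LinearMap.range Φ) ≤ Fintype.card {t : ι // iv t = k0} := by
        refine (Submodule.finrank_le _).trans ?_
        rw [Module.finrank_fintype_fun_eq_card]
      rw [show Module.finrank F (↥A → F) = A.card from by
        rw [Module.finrank_fintype_fun_eq_card, Fintype.card_coe]] at h1
      omega
    obtain ⟨h0, h0W, h0supp⟩ := exists_mem_support_card_ge (LinearMap.ker Φ)
    set h : σ → F := fun z => if hz : z ∈ A then h0 ⟨z, hz⟩ else 0 with hh
    have hhval : ∀ z : ↥A, h (z : σ) = h0 z := by intro z; simp [hh, z.2]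
    have hcontract : ∀ t : ι, iv t = k0 → ∑ z ∈ A, h z * f t z = 0 := by
      intro t ht
      have := congrFun (LinearMap.mem_ker.1 h0W) ⟨t, ht⟩
      simp only [hΦ, LinearMap.pi_apply, hφ, LinearMap.coe_mk, AddHom.coe_mk, Pi.zero_apply] at this
      rw [← Finset.sum_attach A (fun z => h z * f t z)]
      rw [← this, Finset.univ_eq_attach]
      exact Finset.sum_congr rfl fun z _ => by rw [hhval z, mul_comm]
    set A' : Finset σ := A.filter (fun a => h a ≠ 0) with hA'
    have hA'sub : A' ⊆ A := Finset.filter_subset _ _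
    have hA'card : A.card ≤ A'.card + Fintype.card {t : ι // iv t = k0} := by
      have hsupp : A'.card = (Finset.univ.filter (fun z : ↥A => h0 z ≠ 0)).card := by
        rw [hA', Finset.card_filter, Finset.card_filter, Finset.univ_eq_attach,
          ← Finset.sum_attach A (fun a => if h a ≠ 0 then (1:ℕ) else 0)]
        exact Finset.sum_congr rfl fun z _ => by rw [hhval z]
      omega
    have hc' : ∀ a ∈ A', h a * c a ≠ 0 := fun a ha =>
      mul_ne_zero (Finset.mem_filter.1 ha).2 (hc a (hA'sub ha))
    set iv' : {t : ι // ¬ iv t = k0} → K := fun t => iv t.1 with hiv'def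
    set f' : {t : ι // ¬ iv t = k0} → σ → F := fun t => f t.1 with hf'def
    set g' : {t : ι // ¬ iv t = k0} → (K → σ) → F :=
      fun t x => ∑ z ∈ A, h z * g t.1 (Function.update x k0 z) with hg'def
    have hiv'mem : ∀ t, iv' t ∈ S' := fun t => Finset.mem_erase.2 ⟨t.2, hiv t.1⟩
    have hg' : ∀ t (x y : K → σ), (∀ j ∈ S', j ≠ iv' t → x j = y j) → g' t x = g' t y := by
      intro t x y hxy
      apply Finset.sum_congr rfl
      intro z _
      congr 1
      apply hg
      intro j hj hjne
      by_cases hjk : j = k0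
      · subst hjk; rw [Function.update_self, Function.update_self]
      · rw [Function.update_of_ne hjk, Function.update_of_ne hjk]
        exact hxy j (Finset.mem_erase.2 ⟨hjk, hj⟩) hjne
    have heq' : ∀ x : K → σ, (∀ j ∈ S', x j ∈ A') →
        ∑ a ∈ A', (h a * c a) * ∏ j ∈ S', (if x j = a then (1:F) else 0)
          = ∑ t, f' t (x (iv' t)) * g' t x := by
      intro x hx
      have hupdmem : ∀ z ∈ A, ∀ j ∈ S, Function.update x k0 z j ∈ A := by
        intro z hz j hj
        by_cases hjk : j = k0
        · subst hjk; rw [Function.update_self]; exact hz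
        · rw [Function.update_of_ne hjk]
          exact hA'sub (hx j (Finset.mem_erase.2 ⟨hjk, hj⟩))
      have hprodsplit : ∀ z a : σ, (∏ j ∈ S, (if Function.update x k0 z j = a then (1:F) else 0))
          = (if z = a then (1:F) else 0) * ∏ j ∈ S', (if x j = a then (1:F) else 0) := by
        intro z a
        rw [hSins, Finset.prod_insert hk0S', Function.update_self]
        congr 1
        apply Finset.prod_congr rfl
        intro j hj
        rw [Function.update_of_ne (Finset.mem_erase.1 hj).1]
      calc ∑ a ∈ A', (h a * c a) * ∏ j ∈ S', (if x j = a then (1:F) else 0)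
          = ∑ a ∈ A, (h a * c a) * ∏ j ∈ S', (if x j = a then (1:F) else 0) := by
            apply Finset.sum_filter_of_ne
            intro a _ hne hcon
            exact hne (by rw [hcon, zero_mul, zero_mul])
        _ = ∑ z ∈ A, h z * ∑ a ∈ A, c a * ∏ j ∈ S, (if Function.update x k0 z j = a then (1:F) else 0) := by
            have h1 : ∀ z ∈ A, h z * ∑ a ∈ A, c a * ∏ j ∈ S, (if Function.update x k0 z j = a then (1:F) else 0)
                = ∑ a ∈ A, h z * (c a * ((if z = a then (1:F) else 0) * ∏ j ∈ S', (if x j = a then (1:F) else 0))) := by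
              intro z hz
              rw [Finset.mul_sum]
              exact Finset.sum_congr rfl fun a _ => by rw [hprodsplit z a]
            rw [Finset.sum_congr rfl h1, Finset.sum_comm]
            apply Finset.sum_congr rfl
            intro a ha
            rw [Finset.sum_eq_single a]
            · rw [if_pos rfl]; ring
            · intro z _ hza; rw [if_neg hza]; ring
            · intro h'; exact absurd ha h'
        _ = ∑ z ∈ A, h z * ∑ t, f t (Function.update x k0 z (iv t)) * g t (Function.update x k0 z) := by
            exact Finset.sum_congr rfl fun z hz => by rw [heq _ (hupdmem z hz)]
        _ = ∑ t, ∑ z ∈ A, h z * (f t (Function.update x k0 z (iv t)) * g t (Function.update x k0 z)) := by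
            rw [Finset.sum_comm]
            exact Finset.sum_congr rfl fun z _ => Finset.mul_sum _ _ _
        _ = (∑ t ∈ Finset.univ.filter (fun t : ι => iv t = k0), ∑ z ∈ A, h z * (f t (Function.update x k0 z (iv t)) * g t (Function.update x k0 z)))
            + ∑ t ∈ Finset.univ.filter (fun t : ι => ¬ iv t = k0), ∑ z ∈ A, h z * (f t (Function.update x k0 z (iv t)) * g t (Function.update x k0 z)) := 
            (Finset.sum_filter_add_sum_filter_not _ _ _).symm
        _ = 0 + ∑ t, f' t (x (iv' t)) * g' t x := by
            congr 1
            · apply Finset.sum_eq_zero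
              intro t ht
              have htk : iv t = k0 := (Finset.mem_filter.1 ht).2
              have : ∀ z ∈ A, h z * (f t (Function.update x k0 z (iv t)) * g t (Function.update x k0 z))
                  = (h z * f t z) * g t x := by
                intro z hz
                rw [htk, Function.update_self]
                have : g t (Function.update x k0 z) = g t x := by
                  apply hg
                  intro j hj hjne
                  rw [htk] at hjne
                  rw [Function.update_of_ne hjne]
                rw [this]; ring
              rw [Finset.sum_congr rfl this, ← Finset.sum_mul, hcontract t htk, zero_mul]
            · rw [Finset.sum_subtype (p := fun t : ι => ¬ iv t = k0)
                (Finset.univ.filter (fun t : ι => ¬ iv t = k0))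
                (by intro t; simp)
                (fun t => ∑ z ∈ A, h z * (f t (Function.update x k0 z (iv t)) * g t (Function.update x k0 z)))]
              apply Finset.sum_congr rfl
              intro t _
              simp only [hf'def, hg'def, hiv'def]
              rw [Finset.mul_sum]
              apply Finset.sum_congr rfl
              intro z hz
              rw [Function.update_of_ne t.2]
              ring
        _ = ∑ t, f' t (x (iv' t)) * g' t x := zero_add _
    have hfin := ih S' hS'card A' (fun a => h a * c a) hc' {t : ι // ¬ iv t = k0} iv' f' g' hiv'mem hg' heq'
    have hcard1 : Fintype.card {t : ι // ¬ iv t = k0} = Fintype.card ι - Fintype.card {t : ι // iv t = k0} := by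
      rw [Fintype.card_subtype_compl]
    have hcard2 : Fintype.card {t : ι // iv t = k0} ≤ Fintype.card ι := Fintype.card_subtype_le _
    omega

end SliceRank



/-- the counting bound via the polynomial method -/
lemma EG_count (p n : ℕ) (hp : p.Prime) (hn : 1 ≤ n)
    (A : Finset (Fin n → ZMod p))
    (hA : ∀ v : Fin p → (Fin n → ZMod p), (∀ i, v i ∈ A) → (∑ i, v i) = 0 →
      ∀ i j, v i = v j) :
    A.card ≤ p *
      ((Fintype.piFinset fun _ : Fin n => Finset.range ((p-1)*n/p + 1)).filter
        (fun μ => ∑ k, μ k ≤ (p-1)*n/p)).card := by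
  classical
  haveI : Fact p.Prime := ⟨hp⟩
  have hp2 : 2 ≤ p := hp.two_le
  set D : ℕ := (p-1)*n/p with hD
  set Mset : Finset (Fin n → ℕ) :=
    (Fintype.piFinset fun _ : Fin n => Finset.range (D + 1)).filter
      (fun μ => ∑ k, μ k ≤ D) with hMset
  -- the polynomial
  set P : MvPolynomial (Fin p × Fin n) (ZMod p) :=
    ∏ k : Fin n, (1 - (∑ j : Fin p, MvPolynomial.X (j, k)) ^ (p - 1)) with hPdef
  have hdeg : P.totalDegree ≤ (p-1) * n := by
    refine (MvPolynomial.totalDegree_finset_prod _ _).trans ?_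
    have : ∀ k : Fin n,
        (1 - (∑ j : Fin p, MvPolynomial.X (j, k) : MvPolynomial (Fin p × Fin n) (ZMod p)) ^ (p - 1)).totalDegree ≤ p - 1 := by
      intro k
      rw [sub_eq_add_neg]
      refine (MvPolynomial.totalDegree_add _ _).trans ?_
      simp only [MvPolynomial.totalDegree_one, MvPolynomial.totalDegree_neg]
      refine max_le (Nat.zero_le _) ?_
      refine (MvPolynomial.totalDegree_pow _ _).trans ?_
      have hS : (∑ j : Fin p, MvPolynomial.X (j, k) : MvPolynomial (Fin p × Fin n) (ZMod p)).totalDegree ≤ 1 := by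
        refine (MvPolynomial.totalDegree_finset_sum _ _).trans ?_
        refine Finset.sup_le fun j _ => ?_
        rw [MvPolynomial.totalDegree_X]
      calc (p-1) * (∑ j : Fin p, MvPolynomial.X (j, k) : MvPolynomial (Fin p × Fin n) (ZMod p)).totalDegree
          ≤ (p-1) * 1 := Nat.mul_le_mul_left _ hS
        _ = p - 1 := by ring
    calc ∑ k : Fin n, (1 - (∑ j : Fin p, MvPolynomial.X (j, k) : MvPolynomial (Fin p × Fin n) (ZMod p)) ^ (p - 1)).totalDegree
        ≤ ∑ _k : Fin n, (p-1) := Finset.sum_le_sum fun k _ => this k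
      _ = (p-1) * n := by simp [mul_comm]
  -- degree sum over rows
  set rowdeg : ((Fin p × Fin n) →₀ ℕ) → Fin p → ℕ := fun m j => ∑ k, m (j, k) with hrowdeg
  have hmsum : ∀ m ∈ P.support, ∑ j, rowdeg m j ≤ (p-1) * n := by
    intro m hm
    have h1 : ∑ j, rowdeg m j = ∑ q : Fin p × Fin n, m q := by
      rw [← Fintype.sum_prod_type]
    have h2 : ∑ q : Fin p × Fin n, m q = m.sum fun _ e => e := by
      rw [Finsupp.sum_fintype]
      intro a; rfl
    rw [h1, h2]
    exact le_trans (MvPolynomial.le_totalDegree hm) hdeg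
  have hrow : ∀ m ∈ P.support, ∃ j, rowdeg m j ≤ D := by
    intro m hm
    by_contra hcon
    push_neg at hcon
    have : ∑ j : Fin p, (D+1) ≤ ∑ j, rowdeg m j := Finset.sum_le_sum fun j _ => hcon j
    simp only [Finset.sum_const, Finset.card_univ, Fintype.card_fin, smul_eq_mul] at this
    have hlt : (p-1) * n < (D+1) * p := by
      have := Nat.lt_succ_of_le (Nat.le_refl D)
      have : (p-1)*n / p < D + 1 := by omega
      exact (Nat.div_lt_iff_lt_mul (by omega)).1 this
    have := hmsum m hm
    nlinarith [this, hlt]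
  have hppos : 0 < p := by omega
  set jch : ((Fin p × Fin n) →₀ ℕ) → Fin p := fun m =>
    if h : ∃ j, rowdeg m j ≤ D then Classical.choose h else ⟨0, hppos⟩ with hjch
  have hjch_le : ∀ m ∈ P.support, rowdeg m (jch m) ≤ D := by
    intro m hm
    rw [hjch]
    simp only
    rw [dif_pos (hrow m hm)]
    exact Classical.choose_spec (hrow m hm)
  set ρ : ((Fin p × Fin n) →₀ ℕ) → (Fin n → ℕ) := fun m k => m (jch m, k) with hρ
  have hρmem : ∀ m ∈ P.support, ρ m ∈ Mset := by
    intro m hm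
    rw [hMset]
    refine Finset.mem_filter.2 ⟨?_, ?_⟩
    · refine Fintype.mem_piFinset.2 fun k => ?_
      refine Finset.mem_range.2 ?_
      have h1 : m (jch m, k) ≤ rowdeg m (jch m) :=
        Finset.single_le_sum (f := fun k => m (jch m, k)) (fun _ _ => Nat.zero_le _) (mem_univ k)
      have h2 := hjch_le m hm
      have h3 : ρ m k = m (jch m, k) := by rw [hρ]
      omega
    · exact hjch_le m hm
  have hM0 : (fun _ : Fin n => 0) ∈ Mset := by
    rw [hMset]
    refine Finset.mem_filter.2 ⟨Fintype.mem_piFinset.2 fun k => Finset.mem_range.2 (by simp), by simp⟩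
  set κ : ((Fin p × Fin n) →₀ ℕ) → Fin p × ↥Mset := fun m =>
    (jch m, if h : ρ m ∈ Mset then ⟨ρ m, h⟩ else ⟨_, hM0⟩) with hκ
  set iv : Fin p × ↥Mset → Fin p := Prod.fst with hiv
  set f : Fin p × ↥Mset → (Fin n → ZMod p) → ZMod p := fun t y => ∏ k, y k ^ ((t.2 : Fin n → ℕ) k) with hf
  set g : Fin p × ↥Mset → (Fin p → (Fin n → ZMod p)) → ZMod p := fun t x =>
    ∑ m ∈ P.support.filter (fun m => κ m = t),
      (MvPolynomial.coeff m P) * ∏ j ∈ Finset.univ.erase t.1, ∏ k, x j k ^ m (j, k) with hg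
  have hgdep : ∀ t (x y : Fin p → (Fin n → ZMod p)), (∀ j ∈ (Finset.univ : Finset (Fin p)), j ≠ iv t → x j = y j) →
      g t x = g t y := by
    intro t x y hxy
    apply Finset.sum_congr rfl
    intro m _
    congr 1
    apply Finset.prod_congr rfl
    intro j hj
    have := hxy j (mem_univ j) (Finset.mem_erase.1 hj).1
    rw [this]
  -- the evaluation identity
  have heval : ∀ x : Fin p → (Fin n → ZMod p),
      MvPolynomial.eval (fun q : Fin p × Fin n => x q.1 q.2) P
        = ∏ k, (1 - (∑ j, x j k) ^ (p-1)) := by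
    intro x
    rw [hPdef]
    simp [MvPolynomial.eval_prod]
  have hdiagval : ∀ x : Fin p → (Fin n → ZMod p), (∀ j, x j ∈ A) →
      ∑ a ∈ A, (1 : ZMod p) * ∏ j ∈ (Finset.univ : Finset (Fin p)), (if x j = a then (1:ZMod p) else 0)
        = MvPolynomial.eval (fun q : Fin p × Fin n => x q.1 q.2) P := by
    intro x hx
    rw [heval]
    have hR : ∏ k, (1 - (∑ j, x j k) ^ (p-1)) = if (∑ j, x j) = 0 then (1 : ZMod p) else 0 := by
      by_cases hs : (∑ j, x j) = 0
      · rw [if_pos hs]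
        apply Finset.prod_eq_one
        intro k _
        have : (∑ j, x j k) = 0 := by
          have := congrFun hs k
          simpa [Finset.sum_apply] using this
        rw [this, zero_pow (by omega), sub_zero]
      · rw [if_neg hs]
        have : ∃ k, (∑ j, x j k) ≠ 0 := by
          by_contra hcon
          push_neg at hcon
          exact hs (funext fun k => by simpa [Finset.sum_apply] using hcon k)
        obtain ⟨k, hk⟩ := this
        refine Finset.prod_eq_zero (mem_univ k) ?_
        rw [ZMod.pow_card_sub_one_eq_one hk, sub_self]
    rw [hR]
    by_cases hs : (∑ j, x j) = 0
    · rw [if_pos hs]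
      have hall : ∀ i j, x i = x j := hA x hx hs
      set a0 : Fin n → ZMod p := x ⟨0, hppos⟩ with ha0
      rw [Finset.sum_eq_single a0]
      · rw [one_mul]
        apply Finset.prod_eq_one
        intro j _
        rw [if_pos (hall j ⟨0, hppos⟩)]
      · intro b _ hb
        rw [one_mul]
        refine Finset.prod_eq_zero (mem_univ ⟨0, hppos⟩) ?_
        rw [if_neg (fun h => hb (h.symm.trans ha0.symm))]
      · intro h; exact absurd (hx ⟨0, hppos⟩) h
    · rw [if_neg hs]
      apply Finset.sum_eq_zero
      intro a _
      rw [one_mul]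
      have : ∃ j, x j ≠ a := by
        by_contra hcon
        push_neg at hcon
        apply hs
        have : ∑ j, x j = ∑ _j : Fin p, a := Finset.sum_congr rfl (fun j _ => hcon j)
        rw [this, Finset.sum_const, Finset.card_univ, Fintype.card_fin]
        funext k
        simp only [Pi.smul_apply, smul_eq_mul, Pi.zero_apply, nsmul_eq_mul]
        rw [ZMod.natCast_self, zero_mul]
      obtain ⟨j, hj⟩ := this
      exact Finset.prod_eq_zero (mem_univ j) (by rw [if_neg hj])
  -- the decomposition identity
  have hdecomp : ∀ x : Fin p → (Fin n → ZMod p),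
      MvPolynomial.eval (fun q : Fin p × Fin n => x q.1 q.2) P
        = ∑ t : Fin p × ↥Mset, f t (x (iv t)) * g t x := by
    intro x
    conv_lhs => rw [P.as_sum]
    rw [map_sum]
    rw [← Finset.sum_fiberwise_of_maps_to (g := κ) (fun m _ => mem_univ (κ m))
      (fun m => MvPolynomial.eval (fun q : Fin p × Fin n => x q.1 q.2) (MvPolynomial.monomial m (MvPolynomial.coeff m P)))]
    apply Finset.sum_congr rfl
    intro t _
    rw [hg]
    simp only
    rw [Finset.mul_sum]
    apply Finset.sum_congr rfl
    intro m hm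
    have hmsupp : m ∈ P.support := (Finset.mem_filter.1 hm).1
    have hκm : κ m = t := (Finset.mem_filter.1 hm).2
    have hjchm : jch m = t.1 := by rw [← hκm]
    have hρm : ρ m = (t.2 : Fin n → ℕ) := by
      rw [← hκm, hκ]
      simp only [dif_pos (hρmem m hmsupp)]
    rw [MvPolynomial.eval_monomial]
    have hprodall : (m.prod fun q e => (x q.1 q.2) ^ e) = ∏ q : Fin p × Fin n, (x q.1 q.2) ^ m q :=
      Finsupp.prod_pow m _
    rw [hprodall]
    have hsplit : ∏ q : Fin p × Fin n, (x q.1 q.2) ^ m q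
        = (∏ k, (x t.1 k) ^ m (t.1, k)) * ∏ j ∈ Finset.univ.erase t.1, ∏ k, (x j k) ^ m (j, k) := by
      rw [Fintype.prod_prod_type]
      exact (Finset.mul_prod_erase Finset.univ _ (mem_univ t.1)).symm
    rw [hsplit, hf]
    simp only
    have : ∏ k, (x t.1 k) ^ ((t.2 : Fin n → ℕ) k) = ∏ k, (x t.1 k) ^ m (t.1, k) := by
      apply Finset.prod_congr rfl
      intro k _
      rw [← hρm, hρ]
      simp only [hjchm]
    rw [this]
    ring
  -- apply the slice rank lemma
  have hkey := slice_key (F := ZMod p) (K := Fin p) (σ := Fin n → ZMod p) (p - 2)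
    Finset.univ (by simp [Finset.card_univ]; omega)
    A (fun _ => (1 : ZMod p)) (fun a _ => one_ne_zero)
    (Fin p × ↥Mset) iv f g (fun t => mem_univ _) hgdep
    (by
      intro x hx
      rw [hdiagval x (fun j => hx j (mem_univ j))]
      exact hdecomp x)
  calc A.card ≤ Fintype.card (Fin p × ↥Mset) := hkey
    _ = p * Mset.card := by
        rw [Fintype.card_prod, Fintype.card_fin, Fintype.card_coe]


/-- counting bound for monomials of low degree -/
lemma mono_count (n D : ℕ) {x : ℝ} (hx0 : 0 < x) (hx1 : x < 1) :
    (((Fintype.piFinset fun _ : Fin n => Finset.range (D + 1)).filter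
        (fun μ => ∑ k, μ k ≤ D)).card : ℝ)
      ≤ (1/x)^D * (1/(1-x))^n := by
  classical
  set S := (Fintype.piFinset fun _ : Fin n => Finset.range (D + 1)).filter
        (fun μ => ∑ k, μ k ≤ D) with hS
  have hgeom : ∑ e ∈ Finset.range (D+1), x^e ≤ 1/(1-x) := by
    rw [le_div_iff₀ (by linarith)]
    have := geom_sum_mul x (D+1)
    have h2 : (∑ i ∈ range (D+1), x ^ i) * (1 - x) = 1 - x^(D+1) := by
      have := geom_sum_mul x (D+1)
      nlinarith [this]
    rw [h2]
    nlinarith [pow_nonneg hx0.le (D+1)]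
  have hsum : (S.card : ℝ) * x^D ≤ ∑ μ ∈ S, x^(∑ k, μ k) := by
    rw [Finset.card_eq_sum_ones S]
    push_cast
    rw [Finset.sum_mul]
    apply Finset.sum_le_sum
    intro μ hμ
    rw [one_mul]
    exact pow_le_pow_of_le_one hx0.le hx1.le (Finset.mem_filter.1 hμ).2
  have hsum2 : ∑ μ ∈ S, x^(∑ k, μ k) ≤
      ∑ μ ∈ Fintype.piFinset (fun _ : Fin n => Finset.range (D + 1)), x^(∑ k, μ k) := by
    apply Finset.sum_le_sum_of_subset_of_nonneg (Finset.filter_subset _ _)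
    intro μ _ _
    exact pow_nonneg hx0.le _
  have hprod : ∑ μ ∈ Fintype.piFinset (fun _ : Fin n => Finset.range (D + 1)), x^(∑ k, μ k)
      = ∏ _k : Fin n, ∑ e ∈ Finset.range (D+1), x^e := by
    rw [Finset.prod_univ_sum]
    apply Finset.sum_congr rfl
    intro μ _
    rw [← Finset.prod_pow_eq_pow_sum]
  have hfin : ∏ _k : Fin n, ∑ e ∈ Finset.range (D+1), x^e ≤ (1/(1-x))^n := by
    calc ∏ _k : Fin n, ∑ e ∈ Finset.range (D+1), x^e
        ≤ ∏ _k : Fin n, (1/(1-x)) := by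
          apply Finset.prod_le_prod
          · intro k _
            apply Finset.sum_nonneg
            intro e _
            exact pow_nonneg hx0.le _
          · intro k _
            exact hgeom
      _ = (1/(1-x))^n := by rw [Finset.prod_const, Finset.card_univ, Fintype.card_fin]
  have hfinal : (S.card : ℝ) * x^D ≤ (1/(1-x))^n := by
    calc (S.card : ℝ) * x^D ≤ ∑ μ ∈ S, x^(∑ k, μ k) := hsum
      _ ≤ _ := hsum2
      _ = _ := hprod
      _ ≤ _ := hfin
  have hxD : (0:ℝ) < x^D := pow_pos hx0 D
  rw [show (1/x)^D * (1/(1-x))^n = (1/(1-x))^n / x^D by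
    rw [div_pow, one_pow, div_mul_eq_mul_div, one_mul]]
  rw [le_div_iff₀ hxD]
  exact hfinal

/-- the single-shot real bound -/
lemma EG_real (p n : ℕ) (hp : p.Prime) (hn : 1 ≤ n)
    (A : Finset (Fin n → ZMod p))
    (hA : ∀ v : Fin p → (Fin n → ZMod p), (∀ i, v i ∈ A) → (∑ i, v i) = 0 →
      ∀ i j, v i = v j) :
    (A.card : ℝ) ≤ p * ((2 + 1 / ((p : ℝ) - 1)) ^ (((p : ℝ) - 1) / p) * (2 - 1 / (p : ℝ))) ^ n := by
  have hp2 : 2 ≤ p := hp.two_le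
  have hpR : (2:ℝ) ≤ (p:ℝ) := by exact_mod_cast hp2
  set x : ℝ := ((p:ℝ) - 1) / (2*(p:ℝ) - 1) with hx
  have hx0 : 0 < x := by
    apply div_pos <;> linarith
  have hx1 : x < 1 := by
    rw [div_lt_one (by linarith)]
    linarith
  have hp1 : (p:ℝ) - 1 ≠ 0 := by linarith
  have hp21 : 2*(p:ℝ) - 1 ≠ 0 := by linarith
  have hpne : (p:ℝ) ≠ 0 := by linarith
  have hxinv : 1/x = 2 + 1/((p:ℝ)-1) := by
    rw [hx, one_div_div]
    field_simp
    ring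
  have h1xinv : 1/(1-x) = 2 - 1/(p:ℝ) := by
    have h1x : 1 - x = (p:ℝ)/(2*(p:ℝ)-1) := by
      rw [hx, eq_div_iff hp21, sub_mul, div_mul_cancel₀ _ hp21]
      ring
    rw [h1x, one_div_div]
    field_simp
  set D : ℕ := (p-1)*n/p with hD
  have hcount := EG_count p n hp hn A hA
  have hmono := mono_count n D hx0 hx1
  set y : ℝ := 2 + 1/((p:ℝ)-1) with hy
  have hy1 : 1 ≤ y := by
    rw [hy]
    have : 0 < 1/((p:ℝ)-1) := by
      apply div_pos one_pos
      linarith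
    linarith
  -- the exponent bound
  have hDle : (D:ℝ) ≤ (((p:ℝ)-1)/p) * n := by
    have h1 : ((((p-1)*n/p : ℕ)) : ℝ) ≤ (((p-1)*n : ℕ) : ℝ)/((p:ℕ):ℝ) := Nat.cast_div_le
    rw [← hD] at h1
    have h2 : (((p-1)*n : ℕ) : ℝ) = ((p:ℝ)-1)*n := by
      rw [Nat.cast_mul, Nat.cast_sub hp.one_lt.le]
      push_cast
      ring
    rw [h2] at h1
    calc (D:ℝ) ≤ ((p:ℝ)-1)*n/p := h1
      _ = (((p:ℝ)-1)/p) * n := by ring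
  have hrpow : y^D ≤ (y ^ (((p:ℝ)-1)/p)) ^ n := by
    have e1 : y^D = y ^ ((D:ℝ) : ℝ) := by
      rw [Real.rpow_natCast]
    have e2 : (y ^ (((p:ℝ)-1)/p)) ^ n = y ^ ((((p:ℝ)-1)/p) * n) := by
      rw [← Real.rpow_natCast (y ^ (((p:ℝ)-1)/p)) n, ← Real.rpow_mul (by linarith)]
    rw [e1, e2]
    exact Real.rpow_le_rpow_of_exponent_le hy1 hDle
  have hfin : (A.card : ℝ) ≤ p * (y^D * (2 - 1/(p:ℝ))^n) := by
    calc (A.card : ℝ) ≤ (p : ℝ) *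
        (((Fintype.piFinset fun _ : Fin n => Finset.range (D + 1)).filter
          (fun μ => ∑ k, μ k ≤ D)).card : ℝ) := by
          exact_mod_cast hcount
      _ ≤ (p:ℝ) * ((1/x)^D * (1/(1-x))^n) := by
          apply mul_le_mul_of_nonneg_left hmono (by positivity)
      _ = p * (y^D * (2 - 1/(p:ℝ))^n) := by rw [hxinv, h1xinv]
  calc (A.card : ℝ) ≤ p * (y^D * (2 - 1/(p:ℝ))^n) := hfin
    _ ≤ p * ((y ^ (((p:ℝ)-1)/p)) ^ n * (2 - 1/(p:ℝ))^n) := by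
        apply mul_le_mul_of_nonneg_left _ (by positivity)
        apply mul_le_mul_of_nonneg_right hrpow
        have : (0:ℝ) < 2 - 1/(p:ℝ) := by
          have : 1/(p:ℝ) ≤ 1/2 := by
            apply one_div_le_one_div_of_le <;> linarith
          linarith
        positivity
    _ = p * ((y ^ (((p:ℝ)-1)/p)) * (2 - 1/(p:ℝ)))^n := by rw [mul_pow]


/-- If `A ⊆ (ℤ/pℤ)^n` contains no `p` not-all-equal elements (repetition allowed) summing to
zero, then `|A| ≤ ((2 + 1/(p-1))^((p-1)/p) · (2 - 1/p))^n`. -/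
theorem slice_rank_bound_amplified (p n : ℕ) (hp : p.Prime) (hn : 1 ≤ n)
    (A : Finset (Fin n → ZMod p))
    (hA : ∀ v : Fin p → (Fin n → ZMod p), (∀ i, v i ∈ A) → (∑ i, v i) = 0 →
      ∀ i j, v i = v j) :
    (A.card : ℝ) ≤ ((2 + 1 / ((p : ℝ) - 1)) ^ (((p : ℝ) - 1) / p) * (2 - 1 / (p : ℝ))) ^ n := by
  classical
  have hp2 : 2 ≤ p := hp.two_le
  have hpR : (2:ℝ) ≤ (p:ℝ) := by exact_mod_cast hp2
  set c : ℝ := (2 + 1 / ((p : ℝ) - 1)) ^ (((p : ℝ) - 1) / p) * (2 - 1 / (p : ℝ)) with hc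
  have hcpos : 0 < c := by
    rw [hc]
    apply mul_pos
    · apply Real.rpow_pos_of_pos
      have : 0 < 1/((p:ℝ)-1) := div_pos one_pos (by linarith)
      linarith
    · have : 1/(p:ℝ) ≤ 1/2 := by
        apply one_div_le_one_div_of_le <;> linarith
      linarith
  have key : ∀ m : ℕ, 1 ≤ m → ((A.card:ℝ))^m ≤ p * (c^n)^m := by
    intro m hm
    set Φ : (Fin m → (Fin n → ZMod p)) → (Fin (m*n) → ZMod p) :=
      fun q k => q (finProdFinEquiv.symm k).1 (finProdFinEquiv.symm k).2 with hΦ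
    have hΦinj : Function.Injective Φ := by
      intro q q' h
      funext r j
      have := congrFun h (finProdFinEquiv (r, j))
      simpa only [hΦ, Equiv.symm_apply_apply] using this
    set A' : Finset (Fin (m*n) → ZMod p) := (Fintype.piFinset fun _ : Fin m => A).image Φ with hA'def
    have hcard : A'.card = A.card ^ m := by
      rw [hA'def, Finset.card_image_of_injective _ hΦinj, Fintype.card_piFinset]
      rw [Finset.prod_const, Finset.card_univ, Fintype.card_fin]
    have hA' : ∀ v : Fin p → (Fin (m*n) → ZMod p), (∀ i, v i ∈ A') → (∑ i, v i) = 0 →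
        ∀ i j, v i = v j := by
      intro v hv hsum i j
      have hex : ∀ i : Fin p, ∃ q, (∀ r, q r ∈ A) ∧ Φ q = v i := by
        intro i
        obtain ⟨q, hq1, hq2⟩ := Finset.mem_image.1 (hv i)
        exact ⟨q, fun r => Fintype.mem_piFinset.1 hq1 r, hq2⟩
      choose q hqA hqΦ using hex
      have hcomp : ∀ i (r : Fin m) (jj : Fin n), q i r jj = v i (finProdFinEquiv (r, jj)) := by
        intro i r jj
        have := congrFun (hqΦ i) (finProdFinEquiv (r, jj))
        simp only [hΦ, Equiv.symm_apply_apply] at this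
        exact this
      have hall : ∀ r : Fin m, ∀ i i' : Fin p, q i r = q i' r := by
        intro r
        apply hA (fun i => q i r) (fun i => hqA i r)
        funext jj
        rw [Finset.sum_apply, Pi.zero_apply]
        calc ∑ i, q i r jj = ∑ i, v i (finProdFinEquiv (r, jj)) :=
              Finset.sum_congr rfl fun i _ => hcomp i r jj
          _ = (∑ i, v i) (finProdFinEquiv (r, jj)) := by rw [Finset.sum_apply]
          _ = 0 := by rw [hsum]; rfl
      rw [← hqΦ i, ← hqΦ j]
      funext k
      exact congrFun (hall (finProdFinEquiv.symm k).1 i j) (finProdFinEquiv.symm k).2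
    have hmn : 1 ≤ m*n := Nat.mul_le_mul hm hn
    have hEG := EG_real p (m*n) hp hmn A' hA'
    rw [hcard] at hEG
    push_cast at hEG
    calc ((A.card:ℝ))^m ≤ p * c ^ (m*n) := hEG
      _ = p * (c^n)^m := by rw [← pow_mul, mul_comm n m]
  by_contra hlt
  push_neg at hlt
  have hbpos : 0 < c^n := pow_pos hcpos n
  have hration : 1 < (A.card:ℝ)/c^n := (one_lt_div hbpos).2 hlt
  obtain ⟨m, hm⟩ := pow_unbounded_of_one_lt (p:ℝ) hration
  set M := max m 1 with hM
  have hm' : (p:ℝ) < ((A.card:ℝ)/c^n)^M :=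
    lt_of_lt_of_le hm (pow_le_pow_right₀ hration.le (le_max_left m 1))
  have hkey := key M (le_max_right m 1)
  have hle : ((A.card:ℝ)/c^n)^M ≤ p := by
    rw [div_pow, div_le_iff₀ (pow_pos hbpos M)]
    exact hkey
  linarith
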